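/- Let p(x,y,t) be a nonzero homogeneous real polynomial that vanishes on the plane x + y + t = 0, whose monomials have no common monomial factor, and which has exactly 4 distinct monomials. Then, up to a permutation of the variables x, y, t and multiplication by a nonzero real constant, p is one of: x³ + y³ + t³ − 3xyt, x² + y² + 2xy − t², or x² + xy − yt − t². -/

import Mathlib

set_option linter.unusedSectionVars false

open MvPolynomial Finset

namespace Stmt5Aux

noncomputable def e3 (v : Fin 3 → ℕ) : Fin 3 →₀ ℕ := Finsupp.equivFunOnFinite.symm v

@[simp] lemma e3_apply (v : Fin 3 → ℕ) (i : Fin 3) : e3 v i = v i := rfl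

@[simp] lemma e3_inj {v w : Fin 3 → ℕ} : e3 v = e3 w ↔ v = w :=
  Finsupp.equivFunOnFinite.symm.injective.eq_iff

lemma eq_e3 (m : Fin 3 →₀ ℕ) : m = e3 ![m 0, m 1, m 2] := by
  apply Finsupp.ext; intro i; fin_cases i <;> simp [e3]

lemma e3_eq_iff (m : Fin 3 →₀ ℕ) (v : Fin 3 → ℕ) :
    m = e3 v ↔ m 0 = v 0 ∧ m 1 = v 1 ∧ m 2 = v 2 := by
  constructor
  · rintro rfl; simp
  · rintro ⟨h0, h1, h2⟩
    rw [eq_e3 m, e3_inj]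
    funext i; fin_cases i <;> simp [h0, h1, h2]

lemma degsum {p : MvPolynomial (Fin 3) ℝ} {d : ℕ} (hhom : p.IsHomogeneous d)
    {m : Fin 3 →₀ ℕ} (hm : m ∈ p.support) : m 0 + m 1 + m 2 = d := by
  have hd : m.degree = d := by
    by_contra h
    exact (MvPolynomial.mem_support_iff.mp hm) (hhom.coeff_eq_zero h)
  rw [← hd]
  rw [Finsupp.degree_apply]
  rw [Finset.sum_subset (Finset.subset_univ m.support)
    (by intro x _ hx; exact Finsupp.notMem_support_iff.mp hx)]
  simp [Fin.sum_univ_three]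




variable {M : Type*} [DecidableEq M]

noncomputable def trm (lam : M → ℝ) (a c : M → ℕ) (m : M) (n : ℕ) : ℝ :=
  lam m * (-1:ℝ)^(c m) * (if a m ≤ n then ((c m).choose (n - a m) : ℝ) else 0)

lemma trm_eq_zero_of_lt {lam : M → ℝ} {a c : M → ℕ} {m : M} {n : ℕ}
    (h : a m + c m < n) : trm lam a c m n = 0 := by
  unfold trm
  rcases le_or_gt (a m) n with h' | h'
  · rw [if_pos h', Nat.choose_eq_zero_of_lt (by omega)]; simp
  · rw [if_neg (by omega)]; ring

lemma trm_eq_zero_of_gt {lam : M → ℝ} {a c : M → ℕ} {m : M} {n : ℕ}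
    (h : n < a m) : trm lam a c m n = 0 := by
  unfold trm; rw [if_neg (by omega)]; ring

lemma trm_top {lam : M → ℝ} {a c : M → ℕ} {m : M} :
    trm lam a c m (a m + c m) = lam m * (-1:ℝ)^(c m) := by
  unfold trm; rw [if_pos (by omega)]
  simp

lemma trm_bot {lam : M → ℝ} {a c : M → ℕ} {m : M} :
    trm lam a c m (a m) = lam m * (-1:ℝ)^(c m) := by
  unfold trm; rw [if_pos (le_refl _)]; simp

lemma trm_ne_zero {lam : M → ℝ} {a c : M → ℕ} {m : M} {n : ℕ}
    (hlam : lam m ≠ 0) (h1 : a m ≤ n) (h2 : n ≤ a m + c m) :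
    trm lam a c m n ≠ 0 := by
  unfold trm
  rw [if_pos h1]
  have : (0:ℝ) < ((c m).choose (n - a m) : ℝ) := by
    exact_mod_cast Nat.choose_pos (by omega)
  have h3 : (-1:ℝ)^(c m) ≠ 0 := by positivity
  positivity

lemma keyL1 (G : Finset M) (lam : M → ℝ) (a c : M → ℕ)
    (hne : G.Nonempty) (hlam : ∀ m ∈ G, lam m ≠ 0)
    (hinj : ∀ m ∈ G, ∀ m' ∈ G, a m = a m' → c m = c m' → m = m')
    (hID : ∀ n : ℕ, ∑ m ∈ G, trm lam a c m n = 0) :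
    3 ≤ G.card := by
  by_contra hlt
  push_neg at hlt
  interval_cases h : G.card
  · exact absurd (Finset.card_eq_zero.mp h ▸ hne) (by simp)
  · obtain ⟨m, hm⟩ := Finset.card_eq_one.mp h
    have := hID (a m + c m)
    rw [hm, Finset.sum_singleton, trm_top] at this
    have h1 : (-1:ℝ)^(c m) ≠ 0 := by positivity
    exact hlam m (by simp [hm]) (by
      rcases mul_eq_zero.mp this with h' | h'
      · exact h'
      · exact absurd h' h1)
  · obtain ⟨x, y, hxy, hG⟩ := Finset.card_eq_two.mp h
    have hx : x ∈ G := by simp [hG]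
    have hy : y ∈ G := by simp [hG]
    have hsum : ∀ n, trm lam a c x n + trm lam a c y n = 0 := by
      intro n
      have := hID n
      rwa [hG, Finset.sum_insert (by simp [hxy]), Finset.sum_singleton] at this
    have hnz : ∀ m ∈ G, lam m * (-1:ℝ)^(c m) ≠ 0 := by
      intro m hm
      have h1 : (-1:ℝ)^(c m) ≠ 0 := by positivity
      exact mul_ne_zero (hlam m hm) h1
    -- tops are equal
    have htop : a x + c x = a y + c y := by
      rcases lt_trichotomy (a x + c x) (a y + c y) with h' | h' | h'
      · have := hsum (a y + c y)
        rw [trm_eq_zero_of_lt h', trm_top] at this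
        exact absurd (by linarith) (hnz y hy)
      · exact h'
      · have := hsum (a x + c x)
        rw [trm_eq_zero_of_lt h', trm_top] at this
        exact absurd (by linarith) (hnz x hx)
    have hbot : a x = a y := by
      rcases lt_trichotomy (a x) (a y) with h' | h' | h'
      · have := hsum (a x)
        rw [trm_eq_zero_of_gt h', trm_bot] at this
        exact absurd (by linarith) (hnz x hx)
      · exact h'
      · have := hsum (a y)
        rw [trm_eq_zero_of_gt h', trm_bot] at this
        exact absurd (by linarith) (hnz y hy)
    exact hxy (hinj x hx y hy hbot (by omega))



lemma keyB (S : Finset M) (lam : M → ℝ) (a c : M → ℕ) (d : ℕ)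
    (hcard : S.card = 4) (hlam : ∀ m ∈ S, lam m ≠ 0)
    (hinj : ∀ m ∈ S, ∀ m' ∈ S, a m = a m' → c m = c m' → m = m')
    (hac : ∀ m ∈ S, a m + c m ≤ d)
    (h0 : ∃ m ∈ S, a m = 0) (hd : ∃ m ∈ S, a m + c m = d)
    (hID : ∀ n : ℕ, ∑ m ∈ S, trm lam a c m n = 0) :
    2 * d + 2 ≤ ∑ m ∈ S, (c m + 1) := by
  classical
  have hcov : ∀ n ≤ d, 2 ≤ (S.filter (fun m => a m ≤ n ∧ n ≤ a m + c m)).card := by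
    intro n hn
    by_contra hlt
    push_neg at hlt
    set T := S.filter (fun m => a m ≤ n ∧ n ≤ a m + c m) with hT
    have hTsub : T ⊆ S := Finset.filter_subset _ _
    have hzero : ∀ m ∈ S, m ∉ T → trm lam a c m n = 0 := by
      intro m hm hmt
      have : ¬ (a m ≤ n ∧ n ≤ a m + c m) := by
        intro h'; exact hmt (Finset.mem_filter.mpr ⟨hm, h'⟩)
      rcases le_or_gt (a m) n with h' | h'
      · exact trm_eq_zero_of_lt (by omega)
      · exact trm_eq_zero_of_gt h'
    interval_cases hc : T.card
    · -- gap: split S into L and R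
      have hTe : T = ∅ := Finset.card_eq_zero.mp hc
      set L := S.filter (fun m => a m + c m < n) with hL
      set R := S.filter (fun m => n < a m) with hR
      have hLR : ∀ m ∈ S, (m ∈ L ∧ m ∉ R) ∨ (m ∈ R ∧ m ∉ L) := by
        intro m hm
        have hmt : m ∉ T := by rw [hTe]; simp
        have : ¬ (a m ≤ n ∧ n ≤ a m + c m) := by
          intro h'; exact hmt (Finset.mem_filter.mpr ⟨hm, h'⟩)
        rcases le_or_gt (a m) n with h' | h'
        · left; constructor
          · exact Finset.mem_filter.mpr ⟨hm, by omega⟩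
          · simp only [hR, Finset.mem_filter]; push_neg; intro _; omega
        · right; constructor
          · exact Finset.mem_filter.mpr ⟨hm, h'⟩
          · simp only [hL, Finset.mem_filter]; push_neg; intro _; omega
      have hLne : L.Nonempty := by
        obtain ⟨m, hm, hm0⟩ := h0
        rcases hLR m hm with ⟨h1, _⟩ | ⟨h1, _⟩
        · exact ⟨m, h1⟩
        · exfalso; have := Finset.mem_filter.mp h1; omega
      have hRne : R.Nonempty := by
        obtain ⟨m, hm, hmd⟩ := hd
        rcases hLR m hm with ⟨h1, _⟩ | ⟨h1, _⟩
        · exfalso; have := Finset.mem_filter.mp h1; omega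
        · exact ⟨m, h1⟩
      have hIDL : ∀ n' : ℕ, ∑ m ∈ L, trm lam a c m n' = 0 := by
        intro n'
        rcases le_or_gt n n' with h' | h'
        · apply Finset.sum_eq_zero
          intro m hm
          have := Finset.mem_filter.mp hm
          exact trm_eq_zero_of_lt (by omega)
        · have hsplit : ∑ m ∈ L, trm lam a c m n' = ∑ m ∈ S, trm lam a c m n' := by
            apply Finset.sum_subset (Finset.filter_subset _ _)
            intro m hm hml
            rcases hLR m hm with ⟨h1, _⟩ | ⟨h1, _⟩
            · exact absurd h1 hml
            · have := Finset.mem_filter.mp h1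
              exact trm_eq_zero_of_gt (by omega)
          rw [hsplit, hID]
      have hIDR : ∀ n' : ℕ, ∑ m ∈ R, trm lam a c m n' = 0 := by
        intro n'
        rcases le_or_gt n n' with h' | h'
        · have hsplit : ∑ m ∈ R, trm lam a c m n' = ∑ m ∈ S, trm lam a c m n' := by
            apply Finset.sum_subset (Finset.filter_subset _ _)
            intro m hm hmr
            rcases hLR m hm with ⟨h1, _⟩ | ⟨h1, _⟩
            · have := Finset.mem_filter.mp h1
              exact trm_eq_zero_of_lt (by omega)
            · exact absurd h1 hmr
          rw [hsplit, hID]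
        · apply Finset.sum_eq_zero
          intro m hm
          have := Finset.mem_filter.mp hm
          exact trm_eq_zero_of_gt (by omega)
      have h3L : 3 ≤ L.card := keyL1 L lam a c hLne
        (fun m hm => hlam m (Finset.filter_subset _ _ hm))
        (fun m hm m' hm' => hinj m (Finset.filter_subset _ _ hm) m' (Finset.filter_subset _ _ hm')) hIDL
      have h3R : 3 ≤ R.card := keyL1 R lam a c hRne
        (fun m hm => hlam m (Finset.filter_subset _ _ hm))
        (fun m hm m' hm' => hinj m (Finset.filter_subset _ _ hm) m' (Finset.filter_subset _ _ hm')) hIDR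
      have hdisj : Disjoint L R := by
        rw [Finset.disjoint_left]
        intro m hmL hmR
        have h1 := Finset.mem_filter.mp hmL
        have h2 := Finset.mem_filter.mp hmR
        omega
      have := Finset.card_le_card (Finset.union_subset (Finset.filter_subset _ _ : L ⊆ S) (Finset.filter_subset _ _ : R ⊆ S))
      rw [Finset.card_union_of_disjoint hdisj, hcard] at this
      omega
    · -- exactly one covering monomial
      obtain ⟨m₀, hm₀⟩ := Finset.card_eq_one.mp hc
      have hmem : m₀ ∈ T := by simp [hm₀]
      have hmS := hTsub hmem
      have hcond := (Finset.mem_filter.mp hmem).2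
      have := hID n
      have hsplit : ∑ m ∈ S, trm lam a c m n = trm lam a c m₀ n := by
        rw [← Finset.sum_filter_add_sum_filter_not S (fun m => a m ≤ n ∧ n ≤ a m + c m)]
        rw [← hT, hm₀, Finset.sum_singleton]
        have : ∑ m ∈ S.filter (fun m => ¬(a m ≤ n ∧ n ≤ a m + c m)), trm lam a c m n = 0 := by
          apply Finset.sum_eq_zero
          intro m hm
          have h1 := Finset.mem_filter.mp hm
          apply hzero m h1.1
          rw [hT]
          simp only [Finset.mem_filter]
          tauto
        rw [this, add_zero]
      rw [hsplit] at this
      exact trm_ne_zero (hlam m₀ hmS) hcond.1 hcond.2 this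
  -- double counting
  have hdc : ∑ n ∈ Finset.range (d+1), (S.filter (fun m => a m ≤ n ∧ n ≤ a m + c m)).card
      = ∑ m ∈ S, (c m + 1) := by
    have h1 : ∀ n, (S.filter (fun m => a m ≤ n ∧ n ≤ a m + c m)).card
        = ∑ m ∈ S, (if a m ≤ n ∧ n ≤ a m + c m then 1 else 0) := by
      intro n; rw [Finset.card_filter]
    rw [Finset.sum_congr rfl (fun n _ => h1 n), Finset.sum_comm]
    apply Finset.sum_congr rfl
    intro m hm
    have h2 : ∑ n ∈ Finset.range (d+1), (if a m ≤ n ∧ n ≤ a m + c m then 1 else 0)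
        = ((Finset.range (d+1)).filter (fun n => a m ≤ n ∧ n ≤ a m + c m)).card := by
      rw [Finset.card_filter]
    rw [h2]
    have h3 : (Finset.range (d+1)).filter (fun n => a m ≤ n ∧ n ≤ a m + c m)
        = Finset.Icc (a m) (a m + c m) := by
      ext k
      simp only [Finset.mem_filter, Finset.mem_range, Finset.mem_Icc]
      have := hac m hm
      omega
    rw [h3, Nat.card_Icc]
    omega
  have hge : 2 * (d + 1) ≤ ∑ n ∈ Finset.range (d+1), (S.filter (fun m => a m ≤ n ∧ n ≤ a m + c m)).card := by
    calc 2 * (d + 1) = ∑ _n ∈ Finset.range (d+1), 2 := by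
          rw [Finset.sum_const, Finset.card_range]; ring
      _ ≤ _ := Finset.sum_le_sum (fun n hn => hcov n (by have := Finset.mem_range.mp hn; omega))
  omega

lemma negpow (n : ℕ) : (-(Polynomial.X + 1) : Polynomial ℝ)^n
    = (-1 : Polynomial ℝ)^n * (Polynomial.X + 1)^n := by
  rw [← neg_one_mul, mul_pow]

lemma hID_of (p : MvPolynomial (Fin 3) ℝ)
    (hvan' : ∀ g : Fin 3 → ℝ, g 0 + g 1 + g 2 = 0 → eval g p = 0)
    (g : Fin 3 → Polynomial ℝ) (a c : (Fin 3 →₀ ℕ) → ℕ)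
    (hgsum : ∀ r : ℝ, Polynomial.eval r (g 0) + Polynomial.eval r (g 1) + Polynomial.eval r (g 2) = 0)
    (hgprod : ∀ m : Fin 3 →₀ ℕ, g 0 ^ m 0 * g 1 ^ m 1 * g 2 ^ m 2
      = (-1 : Polynomial ℝ)^(c m) * ((Polynomial.X + 1) ^ (c m) * Polynomial.X ^ (a m))) :
    ∀ n : ℕ, ∑ m ∈ p.support,
      (coeff m p) * (-1:ℝ)^(c m) * (if a m ≤ n then ((c m).choose (n - a m) : ℝ) else 0) = 0 := by
  classical
  set φ : MvPolynomial (Fin 3) ℝ →+* Polynomial ℝ :=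
    eval₂Hom (Polynomial.C.comp (RingHom.id ℝ)) g with hφdef
  have hφ : φ p = 0 := by
    apply Polynomial.funext
    intro r
    rw [Polynomial.eval_zero]
    have hcomp : Polynomial.eval r (φ p) = eval (fun v => Polynomial.eval r (g v)) p := by
      show (Polynomial.evalRingHom r) (eval₂ _ g p) = _
      rw [MvPolynomial.eval₂_comp_left (Polynomial.evalRingHom r)]
      congr 1
      · ext x
        simp
    rw [hcomp]
    apply hvan'
    exact hgsum r
  intro n
  have hsum : φ p = ∑ m ∈ p.support,
      Polynomial.C (coeff m p * (-1:ℝ)^(c m)) * ((Polynomial.X + 1) ^ (c m) * Polynomial.X ^ (a m)) := by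
    conv_lhs => rw [MvPolynomial.as_sum p]
    rw [map_sum]
    apply Finset.sum_congr rfl
    intro m _
    have h1 : φ (monomial m (coeff m p)) =
        Polynomial.C (coeff m p) * ∏ v, g v ^ m v := by
      rw [hφdef]
      rw [eval₂Hom_monomial]
      simp only [RingHom.comp_apply, RingHom.id_apply]
      congr 1
      exact Finsupp.prod_fintype _ _ (fun v => pow_zero _)
    rw [h1, Fin.prod_univ_three, hgprod m]
    have h3 : (-1 : Polynomial ℝ)^(c m) = Polynomial.C ((-1:ℝ)^(c m)) := by
      simp
    rw [h3, ← mul_assoc, ← map_mul]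
  have hco : (φ p).coeff n = 0 := by rw [hφ]; simp
  rw [hsum, Polynomial.finset_sum_coeff] at hco
  have heq : ∑ m ∈ p.support,
      (coeff m p) * (-1:ℝ)^(c m) * (if a m ≤ n then ((c m).choose (n - a m) : ℝ) else 0)
      = ∑ m ∈ p.support,
      (Polynomial.C (coeff m p * (-1) ^ c m) * ((Polynomial.X + 1) ^ c m * Polynomial.X ^ a m)).coeff n := by
    apply Finset.sum_congr rfl
    intro m _
    rw [Polynomial.coeff_C_mul, Polynomial.coeff_mul_X_pow']
    congr 1
    split
    · rw [Polynomial.coeff_X_add_one_pow]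
    · rfl
  rw [heq]
  exact hco

lemma hID₁ (p : MvPolynomial (Fin 3) ℝ)
    (hvan' : ∀ g : Fin 3 → ℝ, g 0 + g 1 + g 2 = 0 → eval g p = 0) :
    ∀ n : ℕ, ∑ m ∈ p.support,
      (coeff m p) * (-1:ℝ)^(m 2) * (if m 0 ≤ n then ((m 2).choose (n - m 0) : ℝ) else 0) = 0 :=
  hID_of p hvan' ![Polynomial.X, 1, -(Polynomial.X+1)] (fun m => m 0) (fun m => m 2)
    (by intro r; simp; try ring)
    (by intro m; simp only [negpow, Matrix.cons_val_zero, Matrix.cons_val_one, Matrix.head_cons, Matrix.cons_val_two, Matrix.tail_cons]; ring)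

lemma hID₂ (p : MvPolynomial (Fin 3) ℝ)
    (hvan' : ∀ g : Fin 3 → ℝ, g 0 + g 1 + g 2 = 0 → eval g p = 0) :
    ∀ n : ℕ, ∑ m ∈ p.support,
      (coeff m p) * (-1:ℝ)^(m 0) * (if m 1 ≤ n then ((m 0).choose (n - m 1) : ℝ) else 0) = 0 :=
  hID_of p hvan' ![-(Polynomial.X+1), Polynomial.X, 1] (fun m => m 1) (fun m => m 0)
    (by intro r; simp; try ring)
    (by intro m; simp only [negpow, Matrix.cons_val_zero, Matrix.cons_val_one, Matrix.head_cons, Matrix.cons_val_two, Matrix.tail_cons]; ring)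

lemma hID₃ (p : MvPolynomial (Fin 3) ℝ)
    (hvan' : ∀ g : Fin 3 → ℝ, g 0 + g 1 + g 2 = 0 → eval g p = 0) :
    ∀ n : ℕ, ∑ m ∈ p.support,
      (coeff m p) * (-1:ℝ)^(m 1) * (if m 2 ≤ n then ((m 1).choose (n - m 2) : ℝ) else 0) = 0 :=
  hID_of p hvan' ![1, -(Polynomial.X+1), Polynomial.X] (fun m => m 2) (fun m => m 1)
    (by intro r; simp; try ring)
    (by intro m; simp only [negpow, Matrix.cons_val_zero, Matrix.cons_val_one, Matrix.head_cons, Matrix.cons_val_two, Matrix.tail_cons]; ring)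

lemma as_sum_sub (p : MvPolynomial (Fin 3) ℝ) (T : Finset (Fin 3 →₀ ℕ)) (hsub : p.support ⊆ T) :
    p = ∑ m ∈ T, monomial m (coeff m p) := by
  conv_lhs => rw [MvPolynomial.as_sum p]
  exact Finset.sum_subset hsub (fun x _ hnx => by
    rw [MvPolynomial.notMem_support_iff.mp hnx, map_zero])

lemma enum0 (m : Fin 3 →₀ ℕ) (h : m 0 + m 1 + m 2 = 0) :
    m ∈ ({e3 ![0,0,0]} : Finset (Fin 3 →₀ ℕ)) := by
  simp only [Finset.mem_singleton, e3_eq_iff, Matrix.cons_val_zero, Matrix.cons_val_one,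
    Matrix.head_cons, Matrix.cons_val_two, Matrix.tail_cons]
  omega

lemma enum1 (m : Fin 3 →₀ ℕ) (h : m 0 + m 1 + m 2 = 1) :
    m ∈ ({e3 ![1,0,0], e3 ![0,1,0], e3 ![0,0,1]} : Finset (Fin 3 →₀ ℕ)) := by
  simp only [Finset.mem_insert, Finset.mem_singleton, e3_eq_iff, Matrix.cons_val_zero,
    Matrix.cons_val_one, Matrix.head_cons, Matrix.cons_val_two, Matrix.tail_cons]
  omega

set_option maxHeartbeats 2000000 in
lemma enum2 (m : Fin 3 →₀ ℕ) (h : m 0 + m 1 + m 2 = 2) :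
    m ∈ ({e3 ![2,0,0], e3 ![0,2,0], e3 ![0,0,2], e3 ![1,1,0], e3 ![1,0,1], e3 ![0,1,1]} :
      Finset (Fin 3 →₀ ℕ)) := by
  simp only [Finset.mem_insert, Finset.mem_singleton, e3_eq_iff, Matrix.cons_val_zero,
    Matrix.cons_val_one, Matrix.head_cons, Matrix.cons_val_two, Matrix.tail_cons]
  omega

set_option maxHeartbeats 2000000 in
lemma enum3 (m : Fin 3 →₀ ℕ) (h : m 0 + m 1 + m 2 = 3) :
    m ∈ ({e3 ![3,0,0], e3 ![0,3,0], e3 ![0,0,3], e3 ![2,1,0], e3 ![2,0,1], e3 ![1,2,0],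
          e3 ![0,2,1], e3 ![1,0,2], e3 ![0,1,2], e3 ![1,1,1]} : Finset (Fin 3 →₀ ℕ)) := by
  simp only [Finset.mem_insert, Finset.mem_singleton, e3_eq_iff, Matrix.cons_val_zero,
    Matrix.cons_val_one, Matrix.head_cons, Matrix.cons_val_two, Matrix.tail_cons]
  omega

lemma card_le_three {M : Type*} [DecidableEq M] (x y z : M) :
    ({x, y, z} : Finset M).card ≤ 3 := by
  apply le_trans (Finset.card_insert_le _ _)
  have := Finset.card_insert_le y ({z} : Finset M)
  simp at this ⊢
  omega

lemma mono_e3 (v : Fin 3 → ℕ) (r : ℝ) :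
    monomial (e3 v) r = C r * (X 0 ^ v 0 * X 1 ^ v 1 * X 2 ^ v 2) := by
  rw [monomial_eq]
  congr 1
  rw [Finsupp.prod_fintype _ _ (fun i => pow_zero _), Fin.prod_univ_three]
  simp
lemma eval_mono (g : Fin 3 → ℝ) (v : Fin 3 → ℕ) (r : ℝ) :
    eval g (monomial (e3 v) r) = r * (g 0 ^ v 0 * g 1 ^ v 1 * g 2 ^ v 2) := by
  rw [eval_monomial]
  congr 1
  rw [Finsupp.prod_fintype _ _ (fun i => pow_zero _), Fin.prod_univ_three]
  simp
lemma card_five {M : Type*} [DecidableEq M] (m1 m2 m3 m4 m5 : M)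
    (h12 : m1 ≠ m2) (h13 : m1 ≠ m3) (h14 : m1 ≠ m4) (h15 : m1 ≠ m5)
    (h23 : m2 ≠ m3) (h24 : m2 ≠ m4) (h25 : m2 ≠ m5)
    (h34 : m3 ≠ m4) (h35 : m3 ≠ m5) (h45 : m4 ≠ m5) :
    ({m1, m2, m3, m4, m5} : Finset M).card = 5 := by
  rw [Finset.card_insert_of_notMem (by simp [h12, h13, h14, h15]),
      Finset.card_insert_of_notMem (by simp [h23, h24, h25]),
      Finset.card_insert_of_notMem (by simp [h34, h35]),
      Finset.card_insert_of_notMem (by simp [h45]),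
      Finset.card_singleton]
lemma card_five_e3 (v1 v2 v3 v4 v5 : Fin 3 → ℕ)
    (h : (v1 ≠ v2 ∧ v1 ≠ v3 ∧ v1 ≠ v4 ∧ v1 ≠ v5) ∧ (v2 ≠ v3 ∧ v2 ≠ v4 ∧ v2 ≠ v5) ∧
      (v3 ≠ v4 ∧ v3 ≠ v5) ∧ v4 ≠ v5) :
    ({e3 v1, e3 v2, e3 v3, e3 v4, e3 v5} : Finset (Fin 3 →₀ ℕ)).card = 5 := by
  obtain ⟨⟨a, b, c, d⟩, ⟨e, f, g⟩, ⟨h1, h2⟩, h3⟩ := h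
  exact card_five _ _ _ _ _ (by simp [a]) (by simp [b]) (by simp [c]) (by simp [d])
    (by simp [e]) (by simp [f]) (by simp [g]) (by simp [h1]) (by simp [h2]) (by simp [h3])
lemma not_five (p : MvPolynomial (Fin 3) ℝ) (hcard : p.support.card = 4)
    (s : Finset (Fin 3 →₀ ℕ)) (hc : s.card = 5) (hsub : s ⊆ p.support) : False := by
  have := Finset.card_le_card hsub
  omega

lemma enumz0 (m : Fin 3 →₀ ℕ) (hd : m 0 + m 1 + m 2 = 3) (h : m 0 = 0) :
    m = e3 ![0,3,0] ∨ m = e3 ![0,0,3] ∨ m = e3 ![0,2,1] ∨ m = e3 ![0,1,2] := by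
  simp only [e3_eq_iff, Matrix.cons_val_zero, Matrix.cons_val_one, Matrix.head_cons,
    Matrix.cons_val_two, Matrix.tail_cons]
  omega
lemma enumz1 (m : Fin 3 →₀ ℕ) (hd : m 0 + m 1 + m 2 = 3) (h : m 1 = 0) :
    m = e3 ![3,0,0] ∨ m = e3 ![0,0,3] ∨ m = e3 ![2,0,1] ∨ m = e3 ![1,0,2] := by
  simp only [e3_eq_iff, Matrix.cons_val_zero, Matrix.cons_val_one, Matrix.head_cons,
    Matrix.cons_val_two, Matrix.tail_cons]
  omega
lemma enumz2 (m : Fin 3 →₀ ℕ) (hd : m 0 + m 1 + m 2 = 3) (h : m 2 = 0) :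
    m = e3 ![3,0,0] ∨ m = e3 ![0,3,0] ∨ m = e3 ![2,1,0] ∨ m = e3 ![1,2,0] := by
  simp only [e3_eq_iff, Matrix.cons_val_zero, Matrix.cons_val_one, Matrix.head_cons,
    Matrix.cons_val_two, Matrix.tail_cons]
  omega
lemma rest_one (p : MvPolynomial (Fin 3) ℝ) (hcard : p.support.card = 4)
    (m1 m2 m3 : Fin 3 →₀ ℕ) (h12 : m1 ≠ m2) (h13 : m1 ≠ m3) (h23 : m2 ≠ m3)
    (hm1 : m1 ∈ p.support) (hm2 : m2 ∈ p.support) (hm3 : m3 ∈ p.support) :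
    ∃ n, n ∉ ({m1, m2, m3} : Finset (Fin 3 →₀ ℕ)) ∧
      p.support = insert n {m1, m2, m3} := by
  classical
  have hT : ({m1, m2, m3} : Finset (Fin 3 →₀ ℕ)) ⊆ p.support := by
    intro x hx
    simp only [Finset.mem_insert, Finset.mem_singleton] at hx
    rcases hx with rfl|rfl|rfl <;> assumption
  have hTc : ({m1, m2, m3} : Finset (Fin 3 →₀ ℕ)).card = 3 := by
    rw [Finset.card_insert_of_notMem (by simp [h12, h13]),
        Finset.card_insert_of_notMem (by simp [h23]), Finset.card_singleton]
  have hsd : (p.support \ {m1, m2, m3}).card = 1 := by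
    rw [Finset.card_sdiff_of_subset hT, hTc, hcard]
  obtain ⟨n, hn⟩ := Finset.card_eq_one.mp hsd
  have hnm : n ∈ p.support \ {m1, m2, m3} := hn ▸ Finset.mem_singleton_self n
  refine ⟨n, (Finset.mem_sdiff.mp hnm).2, ?_⟩
  rw [← Finset.sdiff_union_of_subset hT, hn, ← Finset.insert_eq]
lemma rest_two (p : MvPolynomial (Fin 3) ℝ) (hcard : p.support.card = 4)
    (m1 m2 : Fin 3 →₀ ℕ) (h12 : m1 ≠ m2)
    (hm1 : m1 ∈ p.support) (hm2 : m2 ∈ p.support) :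
    ∃ n1 n2, n1 ≠ n2 ∧ n1 ∉ ({m1, m2} : Finset (Fin 3 →₀ ℕ)) ∧
      n2 ∉ ({m1, m2} : Finset (Fin 3 →₀ ℕ)) ∧
      p.support = insert n1 (insert n2 {m1, m2}) := by
  classical
  have hT : ({m1, m2} : Finset (Fin 3 →₀ ℕ)) ⊆ p.support := by
    intro x hx
    simp only [Finset.mem_insert, Finset.mem_singleton] at hx
    rcases hx with rfl|rfl <;> assumption
  have hTc : ({m1, m2} : Finset (Fin 3 →₀ ℕ)).card = 2 := by
    rw [Finset.card_insert_of_notMem (by simp [h12]), Finset.card_singleton]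
  have hsd : (p.support \ {m1, m2}).card = 2 := by
    rw [Finset.card_sdiff_of_subset hT, hTc, hcard]
  obtain ⟨n1, n2, hne, hn⟩ := Finset.card_eq_two.mp hsd
  have hnm1 : n1 ∈ p.support \ {m1, m2} := by rw [hn]; simp
  have hnm2 : n2 ∈ p.support \ {m1, m2} := by rw [hn]; simp
  refine ⟨n1, n2, hne, (Finset.mem_sdiff.mp hnm1).2, (Finset.mem_sdiff.mp hnm2).2, ?_⟩
  rw [← Finset.sdiff_union_of_subset hT, hn]
  rw [Finset.insert_union, ← Finset.insert_eq]


set_option linter.unusedTactic false in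
set_option linter.unreachableTactic false in
set_option maxHeartbeats 8000000 in
lemma deg2 (p : MvPolynomial (Fin 3) ℝ)
    (hcard : p.support.card = 4)
    (hvan' : ∀ g : Fin 3 → ℝ, g 0 + g 1 + g 2 = 0 → eval g p = 0)
    (hdeg : ∀ m ∈ p.support, m 0 + m 1 + m 2 = 2) :
    ∃ (σ : Equiv.Perm (Fin 3)) (c : ℝ), c ≠ 0 ∧
      (rename σ p = C c * (X 0 ^ 3 + X 1 ^ 3 + X 2 ^ 3 - C 3 * X 0 * X 1 * X 2) ∨
       rename σ p = C c * (X 0 ^ 2 + X 1 ^ 2 + C 2 * X 0 * X 1 - X 2 ^ 2) ∨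
       rename σ p = C c * (X 0 ^ 2 + X 0 * X 1 - X 1 * X 2 - X 2 ^ 2)) := by
  classical
  set A := coeff (e3 ![2,0,0]) p with hA
  set B := coeff (e3 ![0,2,0]) p with hB
  set G := coeff (e3 ![0,0,2]) p with hG
  set D := coeff (e3 ![1,1,0]) p with hD
  set E := coeff (e3 ![1,0,1]) p with hE
  set F := coeff (e3 ![0,1,1]) p with hF
  have hsub : p.support ⊆
      {e3 ![2,0,0], e3 ![0,2,0], e3 ![0,0,2], e3 ![1,1,0], e3 ![1,0,1], e3 ![0,1,1]} :=
    fun m hm => enum2 m (hdeg m hm)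
  have hrep : p = monomial (e3 ![2,0,0]) A + monomial (e3 ![0,2,0]) B + monomial (e3 ![0,0,2]) G
      + monomial (e3 ![1,1,0]) D + monomial (e3 ![1,0,1]) E + monomial (e3 ![0,1,1]) F := by
    rw [as_sum_sub p _ hsub]
    rw [Finset.sum_insert (by simp only [Finset.mem_insert, Finset.mem_singleton, e3_inj]; decide),
        Finset.sum_insert (by simp only [Finset.mem_insert, Finset.mem_singleton, e3_inj]; decide),
        Finset.sum_insert (by simp only [Finset.mem_insert, Finset.mem_singleton, e3_inj]; decide),
        Finset.sum_insert (by simp only [Finset.mem_insert, Finset.mem_singleton, e3_inj]; decide),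
        Finset.sum_insert (by simp only [Finset.mem_singleton, e3_inj]; decide),
        Finset.sum_singleton]
    ring
  have hev : ∀ x : ℝ, A*x^2 + B + G*(x+1)^2 + D*x - E*(x^2+x) - F*(x+1) = 0 := by
    intro x
    have h := hvan' ![x, 1, -x-1] (by
      simp only [Matrix.cons_val_zero, Matrix.cons_val_one, Matrix.head_cons,
        Matrix.cons_val_two, Matrix.tail_cons]
      ring)
    rw [hrep] at h
    simp only [map_add, eval_mono, Matrix.cons_val_zero, Matrix.cons_val_one, Matrix.head_cons,
      Matrix.cons_val_two, Matrix.tail_cons] at h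
    linear_combination h
  have q0 := hev 0
  have q1 := hev 1
  have q2 := hev (-1)
  norm_num at q0 q1 q2
  have hDr : D = A + B := by linarith
  have hEr : E = A + G := by linarith
  have hFr : F = B + G := by linarith
  by_cases hAz : A = 0
  · by_cases hBz : B = 0
    · by_cases hGz : G = 0
      ·
        exfalso
        have h3 : p.support ⊆ ({e3 ![2,0,0], e3 ![0,2,0], e3 ![0,0,2]} : Finset (Fin 3 →₀ ℕ)) := by
          intro m hm
          have hm' := MvPolynomial.mem_support_iff.mp hm
          have h6 := hsub hm
          simp only [Finset.mem_insert, Finset.mem_singleton] at h6 ⊢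
          rcases h6 with rfl|rfl|rfl|rfl|rfl|rfl <;>
            first
              | tauto
              | (exact absurd (by rw [← hA]; linarith) hm')
              | (exact absurd (by rw [← hB]; linarith) hm')
              | (exact absurd (by rw [← hG]; linarith) hm')
              | (exact absurd (by rw [← hD]; linarith) hm')
              | (exact absurd (by rw [← hE]; linarith) hm')
              | (exact absurd (by rw [← hF]; linarith) hm')
        exact absurd (Finset.card_le_card h3)
          (by have := card_le_three (e3 ![2,0,0]) (e3 ![0,2,0]) (e3 ![0,0,2]); omega)
      ·
        exfalso
        have h3 : p.support ⊆ ({e3 ![0,0,2], e3 ![1,0,1], e3 ![0,1,1]} : Finset (Fin 3 →₀ ℕ)) := by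
          intro m hm
          have hm' := MvPolynomial.mem_support_iff.mp hm
          have h6 := hsub hm
          simp only [Finset.mem_insert, Finset.mem_singleton] at h6 ⊢
          rcases h6 with rfl|rfl|rfl|rfl|rfl|rfl <;>
            first
              | tauto
              | (exact absurd (by rw [← hA]; linarith) hm')
              | (exact absurd (by rw [← hB]; linarith) hm')
              | (exact absurd (by rw [← hG]; linarith) hm')
              | (exact absurd (by rw [← hD]; linarith) hm')
              | (exact absurd (by rw [← hE]; linarith) hm')
              | (exact absurd (by rw [← hF]; linarith) hm')
        exact absurd (Finset.card_le_card h3)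
          (by have := card_le_three (e3 ![0,0,2]) (e3 ![1,0,1]) (e3 ![0,1,1]); omega)
    · by_cases hGz : G = 0
      ·
        exfalso
        have h3 : p.support ⊆ ({e3 ![0,2,0], e3 ![1,1,0], e3 ![0,1,1]} : Finset (Fin 3 →₀ ℕ)) := by
          intro m hm
          have hm' := MvPolynomial.mem_support_iff.mp hm
          have h6 := hsub hm
          simp only [Finset.mem_insert, Finset.mem_singleton] at h6 ⊢
          rcases h6 with rfl|rfl|rfl|rfl|rfl|rfl <;>
            first
              | tauto
              | (exact absurd (by rw [← hA]; linarith) hm')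
              | (exact absurd (by rw [← hB]; linarith) hm')
              | (exact absurd (by rw [← hG]; linarith) hm')
              | (exact absurd (by rw [← hD]; linarith) hm')
              | (exact absurd (by rw [← hE]; linarith) hm')
              | (exact absurd (by rw [← hF]; linarith) hm')
        exact absurd (Finset.card_le_card h3)
          (by have := card_le_three (e3 ![0,2,0]) (e3 ![1,1,0]) (e3 ![0,1,1]); omega)
      · by_cases hFz : F = 0
        ·
          have hG' : G = -B := by linarith
          have hD' : D = B := by linarith
          have hE' : E = -B := by linarith
          refine ⟨Equiv.swap 0 1, B, hBz, Or.inr (Or.inr ?_)⟩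
          rw [hrep, hAz, hG', hD', hE', hFz]
          simp only [mono_e3, Matrix.cons_val_zero, Matrix.cons_val_one, Matrix.head_cons,
            Matrix.cons_val_two, Matrix.tail_cons, map_neg, map_zero, map_add, map_mul,
            map_pow, map_ofNat, rename_C, rename_X, Equiv.coe_refl, rename_id, id_eq, AlgHom.id_apply]
          rw [show ((Equiv.swap 0 1 : Equiv.Perm (Fin 3)) 0) = 1 by decide,
              show ((Equiv.swap 0 1 : Equiv.Perm (Fin 3)) 1) = 0 by decide,
              show ((Equiv.swap 0 1 : Equiv.Perm (Fin 3)) 2) = 2 by decide]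
          ring
        ·
          exfalso
          apply not_five p hcard {e3 ![0,2,0], e3 ![0,0,2], e3 ![1,1,0], e3 ![1,0,1], e3 ![0,1,1]}
            (card_five_e3 _ _ _ _ _ (by refine ⟨⟨?_,?_,?_,?_⟩,⟨?_,?_,?_⟩,⟨?_,?_⟩,?_⟩ <;> decide))
          intro m hm
          simp only [Finset.mem_insert, Finset.mem_singleton] at hm
          rcases hm with rfl|rfl|rfl|rfl|rfl
          · exact MvPolynomial.mem_support_iff.mpr (by rw [← hB]; exact hBz)
          · exact MvPolynomial.mem_support_iff.mpr (by rw [← hG]; exact hGz)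
          · exact MvPolynomial.mem_support_iff.mpr (by rw [← hD]; intro hh; apply hBz; linarith)
          · exact MvPolynomial.mem_support_iff.mpr (by rw [← hE]; intro hh; apply hGz; linarith)
          · exact MvPolynomial.mem_support_iff.mpr (by rw [← hF]; exact hFz)
  · by_cases hBz : B = 0
    · by_cases hGz : G = 0
      ·
        exfalso
        have h3 : p.support ⊆ ({e3 ![2,0,0], e3 ![1,1,0], e3 ![1,0,1]} : Finset (Fin 3 →₀ ℕ)) := by
          intro m hm
          have hm' := MvPolynomial.mem_support_iff.mp hm
          have h6 := hsub hm
          simp only [Finset.mem_insert, Finset.mem_singleton] at h6 ⊢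
          rcases h6 with rfl|rfl|rfl|rfl|rfl|rfl <;>
            first
              | tauto
              | (exact absurd (by rw [← hA]; linarith) hm')
              | (exact absurd (by rw [← hB]; linarith) hm')
              | (exact absurd (by rw [← hG]; linarith) hm')
              | (exact absurd (by rw [← hD]; linarith) hm')
              | (exact absurd (by rw [← hE]; linarith) hm')
              | (exact absurd (by rw [← hF]; linarith) hm')
        exact absurd (Finset.card_le_card h3)
          (by have := card_le_three (e3 ![2,0,0]) (e3 ![1,1,0]) (e3 ![1,0,1]); omega)
      · by_cases hEz : E = 0
        ·
          have hG' : G = -A := by linarith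
          have hD' : D = A := by linarith
          have hF' : F = -A := by linarith
          refine ⟨Equiv.refl (Fin 3), A, hAz, Or.inr (Or.inr ?_)⟩
          rw [hrep, hBz, hG', hD', hEz, hF']
          simp only [mono_e3, Matrix.cons_val_zero, Matrix.cons_val_one, Matrix.head_cons,
            Matrix.cons_val_two, Matrix.tail_cons, map_neg, map_zero, map_add, map_mul,
            map_pow, map_ofNat, rename_C, rename_X, Equiv.coe_refl, rename_id, id_eq, AlgHom.id_apply]
          ring
        ·
          exfalso
          apply not_five p hcard {e3 ![2,0,0], e3 ![0,0,2], e3 ![1,1,0], e3 ![1,0,1], e3 ![0,1,1]}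
            (card_five_e3 _ _ _ _ _ (by refine ⟨⟨?_,?_,?_,?_⟩,⟨?_,?_,?_⟩,⟨?_,?_⟩,?_⟩ <;> decide))
          intro m hm
          simp only [Finset.mem_insert, Finset.mem_singleton] at hm
          rcases hm with rfl|rfl|rfl|rfl|rfl
          · exact MvPolynomial.mem_support_iff.mpr (by rw [← hA]; exact hAz)
          · exact MvPolynomial.mem_support_iff.mpr (by rw [← hG]; exact hGz)
          · exact MvPolynomial.mem_support_iff.mpr (by rw [← hD]; intro hh; apply hAz; linarith)
          · exact MvPolynomial.mem_support_iff.mpr (by rw [← hE]; exact hEz)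
          · exact MvPolynomial.mem_support_iff.mpr (by rw [← hF]; intro hh; apply hGz; linarith)
    · by_cases hGz : G = 0
      · by_cases hDz : D = 0
        ·
          have hB' : B = -A := by linarith
          have hE' : E = A := by linarith
          have hF' : F = -A := by linarith
          refine ⟨Equiv.swap 1 2, A, hAz, Or.inr (Or.inr ?_)⟩
          rw [hrep, hB', hGz, hDz, hE', hF']
          simp only [mono_e3, Matrix.cons_val_zero, Matrix.cons_val_one, Matrix.head_cons,
            Matrix.cons_val_two, Matrix.tail_cons, map_neg, map_zero, map_add, map_mul,
            map_pow, map_ofNat, rename_C, rename_X, Equiv.coe_refl, rename_id, id_eq, AlgHom.id_apply]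
          rw [show ((Equiv.swap 1 2 : Equiv.Perm (Fin 3)) 0) = 0 by decide,
              show ((Equiv.swap 1 2 : Equiv.Perm (Fin 3)) 1) = 2 by decide,
              show ((Equiv.swap 1 2 : Equiv.Perm (Fin 3)) 2) = 1 by decide]
          ring
        ·
          exfalso
          apply not_five p hcard {e3 ![2,0,0], e3 ![0,2,0], e3 ![1,1,0], e3 ![1,0,1], e3 ![0,1,1]}
            (card_five_e3 _ _ _ _ _ (by refine ⟨⟨?_,?_,?_,?_⟩,⟨?_,?_,?_⟩,⟨?_,?_⟩,?_⟩ <;> decide))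
          intro m hm
          simp only [Finset.mem_insert, Finset.mem_singleton] at hm
          rcases hm with rfl|rfl|rfl|rfl|rfl
          · exact MvPolynomial.mem_support_iff.mpr (by rw [← hA]; exact hAz)
          · exact MvPolynomial.mem_support_iff.mpr (by rw [← hB]; exact hBz)
          · exact MvPolynomial.mem_support_iff.mpr (by rw [← hD]; exact hDz)
          · exact MvPolynomial.mem_support_iff.mpr (by rw [← hE]; intro hh; apply hAz; linarith)
          · exact MvPolynomial.mem_support_iff.mpr (by rw [← hF]; intro hh; apply hBz; linarith)
      · by_cases hDz : D = 0
        · by_cases hEz : E = 0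
          · by_cases hFz : F = 0
            · exact absurd (by linarith : A = 0) hAz
            ·
              have hB' : B = -A := by linarith
              have hG' : G = -A := by linarith
              have hF' : F = -(2*A) := by linarith
              refine ⟨Equiv.swap 0 2 * Equiv.swap 1 2, -A, by intro hh; apply hAz; linarith, Or.inr (Or.inl ?_)⟩
              rw [hrep, hB', hG', hDz, hEz, hF']
              simp only [mono_e3, Matrix.cons_val_zero, Matrix.cons_val_one, Matrix.head_cons,
                Matrix.cons_val_two, Matrix.tail_cons, map_neg, map_zero, map_add, map_mul,
                map_pow, map_ofNat, rename_C, rename_X, Equiv.coe_refl, rename_id, id_eq, AlgHom.id_apply]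
              rw [show ((Equiv.swap 0 2 * Equiv.swap 1 2 : Equiv.Perm (Fin 3)) 0) = 2 by decide,
                  show ((Equiv.swap 0 2 * Equiv.swap 1 2 : Equiv.Perm (Fin 3)) 1) = 0 by decide,
                  show ((Equiv.swap 0 2 * Equiv.swap 1 2 : Equiv.Perm (Fin 3)) 2) = 1 by decide]
              ring
          · by_cases hFz : F = 0
            ·
              have hB' : B = -A := by linarith
              have hG' : G = A := by linarith
              have hE' : E = 2*A := by linarith
              refine ⟨Equiv.swap 1 2, A, hAz, Or.inr (Or.inl ?_)⟩
              rw [hrep, hB', hG', hDz, hE', hFz]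
              simp only [mono_e3, Matrix.cons_val_zero, Matrix.cons_val_one, Matrix.head_cons,
                Matrix.cons_val_two, Matrix.tail_cons, map_neg, map_zero, map_add, map_mul,
                map_pow, map_ofNat, rename_C, rename_X, Equiv.coe_refl, rename_id, id_eq, AlgHom.id_apply]
              rw [show ((Equiv.swap 1 2 : Equiv.Perm (Fin 3)) 0) = 0 by decide,
                  show ((Equiv.swap 1 2 : Equiv.Perm (Fin 3)) 1) = 2 by decide,
                  show ((Equiv.swap 1 2 : Equiv.Perm (Fin 3)) 2) = 1 by decide]
              ring
            ·
              exfalso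
              apply not_five p hcard {e3 ![2,0,0], e3 ![0,2,0], e3 ![0,0,2], e3 ![1,0,1], e3 ![0,1,1]}
                (card_five_e3 _ _ _ _ _ (by refine ⟨⟨?_,?_,?_,?_⟩,⟨?_,?_,?_⟩,⟨?_,?_⟩,?_⟩ <;> decide))
              intro m hm
              simp only [Finset.mem_insert, Finset.mem_singleton] at hm
              rcases hm with rfl|rfl|rfl|rfl|rfl
              · exact MvPolynomial.mem_support_iff.mpr (by rw [← hA]; exact hAz)
              · exact MvPolynomial.mem_support_iff.mpr (by rw [← hB]; exact hBz)
              · exact MvPolynomial.mem_support_iff.mpr (by rw [← hG]; exact hGz)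
              · exact MvPolynomial.mem_support_iff.mpr (by rw [← hE]; exact hEz)
              · exact MvPolynomial.mem_support_iff.mpr (by rw [← hF]; exact hFz)
        · by_cases hEz : E = 0
          · by_cases hFz : F = 0
            ·
              have hB' : B = A := by linarith
              have hG' : G = -A := by linarith
              have hD' : D = 2*A := by linarith
              refine ⟨Equiv.refl (Fin 3), A, hAz, Or.inr (Or.inl ?_)⟩
              rw [hrep, hB', hG', hD', hEz, hFz]
              simp only [mono_e3, Matrix.cons_val_zero, Matrix.cons_val_one, Matrix.head_cons,
                Matrix.cons_val_two, Matrix.tail_cons, map_neg, map_zero, map_add, map_mul,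
                map_pow, map_ofNat, rename_C, rename_X, Equiv.coe_refl, rename_id, id_eq, AlgHom.id_apply]
              ring
            ·
              exfalso
              apply not_five p hcard {e3 ![2,0,0], e3 ![0,2,0], e3 ![0,0,2], e3 ![1,1,0], e3 ![0,1,1]}
                (card_five_e3 _ _ _ _ _ (by refine ⟨⟨?_,?_,?_,?_⟩,⟨?_,?_,?_⟩,⟨?_,?_⟩,?_⟩ <;> decide))
              intro m hm
              simp only [Finset.mem_insert, Finset.mem_singleton] at hm
              rcases hm with rfl|rfl|rfl|rfl|rfl
              · exact MvPolynomial.mem_support_iff.mpr (by rw [← hA]; exact hAz)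
              · exact MvPolynomial.mem_support_iff.mpr (by rw [← hB]; exact hBz)
              · exact MvPolynomial.mem_support_iff.mpr (by rw [← hG]; exact hGz)
              · exact MvPolynomial.mem_support_iff.mpr (by rw [← hD]; exact hDz)
              · exact MvPolynomial.mem_support_iff.mpr (by rw [← hF]; exact hFz)
          ·
            exfalso
            apply not_five p hcard {e3 ![2,0,0], e3 ![0,2,0], e3 ![0,0,2], e3 ![1,1,0], e3 ![1,0,1]}
              (card_five_e3 _ _ _ _ _ (by refine ⟨⟨?_,?_,?_,?_⟩,⟨?_,?_,?_⟩,⟨?_,?_⟩,?_⟩ <;> decide))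
            intro m hm
            simp only [Finset.mem_insert, Finset.mem_singleton] at hm
            rcases hm with rfl|rfl|rfl|rfl|rfl
            · exact MvPolynomial.mem_support_iff.mpr (by rw [← hA]; exact hAz)
            · exact MvPolynomial.mem_support_iff.mpr (by rw [← hB]; exact hBz)
            · exact MvPolynomial.mem_support_iff.mpr (by rw [← hG]; exact hGz)
            · exact MvPolynomial.mem_support_iff.mpr (by rw [← hD]; exact hDz)
            · exact MvPolynomial.mem_support_iff.mpr (by rw [← hE]; exact hEz)


set_option linter.unusedTactic false in
set_option linter.unreachableTactic false in
set_option maxHeartbeats 16000000 in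
lemma deg3 (p : MvPolynomial (Fin 3) ℝ)
    (hcard : p.support.card = 4)
    (hvan' : ∀ g : Fin 3 → ℝ, g 0 + g 1 + g 2 = 0 → eval g p = 0)
    (hdeg : ∀ m ∈ p.support, m 0 + m 1 + m 2 = 3)
    (hzero : ∀ i : Fin 3, ∃ m ∈ p.support, m i = 0)
    (hcol : ∀ i : Fin 3, ∑ m ∈ p.support, m i = 4) :
    ∃ (σ : Equiv.Perm (Fin 3)) (c : ℝ), c ≠ 0 ∧
      (rename σ p = C c * (X 0 ^ 3 + X 1 ^ 3 + X 2 ^ 3 - C 3 * X 0 * X 1 * X 2) ∨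
       rename σ p = C c * (X 0 ^ 2 + X 1 ^ 2 + C 2 * X 0 * X 1 - X 2 ^ 2) ∨
       rename σ p = C c * (X 0 ^ 2 + X 0 * X 1 - X 1 * X 2 - X 2 ^ 2)) := by
  classical
  set c300 := coeff (e3 ![3,0,0]) p with h300
  set c030 := coeff (e3 ![0,3,0]) p with h030
  set c003 := coeff (e3 ![0,0,3]) p with h003
  set c210 := coeff (e3 ![2,1,0]) p with h210
  set c201 := coeff (e3 ![2,0,1]) p with h201
  set c120 := coeff (e3 ![1,2,0]) p with h120
  set c021 := coeff (e3 ![0,2,1]) p with h021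
  set c102 := coeff (e3 ![1,0,2]) p with h102
  set c012 := coeff (e3 ![0,1,2]) p with h012
  set c111 := coeff (e3 ![1,1,1]) p with h111
  have hsub : p.support ⊆
      {e3 ![3,0,0], e3 ![0,3,0], e3 ![0,0,3], e3 ![2,1,0], e3 ![2,0,1], e3 ![1,2,0],
       e3 ![0,2,1], e3 ![1,0,2], e3 ![0,1,2], e3 ![1,1,1]} :=
    fun m hm => enum3 m (hdeg m hm)
  have hrep : p = monomial (e3 ![3,0,0]) c300 + monomial (e3 ![0,3,0]) c030
      + monomial (e3 ![0,0,3]) c003 + monomial (e3 ![2,1,0]) c210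
      + monomial (e3 ![2,0,1]) c201 + monomial (e3 ![1,2,0]) c120
      + monomial (e3 ![0,2,1]) c021 + monomial (e3 ![1,0,2]) c102
      + monomial (e3 ![0,1,2]) c012 + monomial (e3 ![1,1,1]) c111 := by
    rw [as_sum_sub p _ hsub]
    rw [Finset.sum_insert (by simp only [Finset.mem_insert, Finset.mem_singleton, e3_inj]; decide),
        Finset.sum_insert (by simp only [Finset.mem_insert, Finset.mem_singleton, e3_inj]; decide),
        Finset.sum_insert (by simp only [Finset.mem_insert, Finset.mem_singleton, e3_inj]; decide),
        Finset.sum_insert (by simp only [Finset.mem_insert, Finset.mem_singleton, e3_inj]; decide),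
        Finset.sum_insert (by simp only [Finset.mem_insert, Finset.mem_singleton, e3_inj]; decide),
        Finset.sum_insert (by simp only [Finset.mem_insert, Finset.mem_singleton, e3_inj]; decide),
        Finset.sum_insert (by simp only [Finset.mem_insert, Finset.mem_singleton, e3_inj]; decide),
        Finset.sum_insert (by simp only [Finset.mem_insert, Finset.mem_singleton, e3_inj]; decide),
        Finset.sum_insert (by simp only [Finset.mem_singleton, e3_inj]; decide),
        Finset.sum_singleton]
    ring
  have hev : ∀ x : ℝ, c300*x^3 + c030 + c003*(-x-1)^3 + c210*x^2 + c201*(x^2*(-x-1))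
      + c120*x + c021*(-x-1) + c102*(x*(-x-1)^2) + c012*((-x-1)^2) + c111*(x*(-x-1)) = 0 := by
    intro x
    have h := hvan' ![x, 1, -x-1] (by
      simp only [Matrix.cons_val_zero, Matrix.cons_val_one, Matrix.head_cons,
        Matrix.cons_val_two, Matrix.tail_cons]
      ring)
    rw [hrep] at h
    simp only [map_add, eval_mono, Matrix.cons_val_zero, Matrix.cons_val_one, Matrix.head_cons,
      Matrix.cons_val_two, Matrix.tail_cons] at h
    linear_combination h
  have q0 := hev 0
  have q1 := hev 1
  have q2 := hev (-1)
  have q3 := hev 2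
  norm_num at q0 q1 q2 q3
  have hR1 : c102 = c003 + c201 - c300 := by linarith
  have hR2 : c012 = c003 + c021 - c030 := by linarith
  have hR3 : c120 = c030 + c210 - c300 := by linarith
  have hR4 : c111 = c210 + c201 + c021 - 2*c300 - c030 := by linarith
  by_cases hu : c300 = 0
  · by_cases hv : c030 = 0
    · by_cases hw : c003 = 0
      ·
        exfalso
        obtain ⟨m, hm, hmz⟩ := hzero 2
        have hdm := hdeg m hm
        have hnzm := MvPolynomial.mem_support_iff.mp hm
        have key1 : c210 ≠ 0 ∧ c120 ≠ 0 := by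
          rcases enumz2 m hdm hmz with rfl|rfl|rfl|rfl
          · exact absurd (by rw [← h300]; exact hu) hnzm
          · exact absurd (by rw [← h030]; exact hv) hnzm
          · have h1 : c210 ≠ 0 := by rw [h210]; exact hnzm
            exact ⟨h1, fun hz => h1 (by linarith)⟩
          · have h1 : c120 ≠ 0 := by rw [h120]; exact hnzm
            exact ⟨fun hz => h1 (by linarith), h1⟩
        obtain ⟨m', hm', hmz'⟩ := hzero 1
        have hdm' := hdeg m' hm'
        have hnzm' := MvPolynomial.mem_support_iff.mp hm'
        have key2 : c201 ≠ 0 ∧ c102 ≠ 0 := by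
          rcases enumz1 m' hdm' hmz' with rfl|rfl|rfl|rfl
          · exact absurd (by rw [← h300]; exact hu) hnzm'
          · exact absurd (by rw [← h003]; exact hw) hnzm'
          · have h1 : c201 ≠ 0 := by rw [h201]; exact hnzm'
            exact ⟨h1, fun hz => h1 (by linarith)⟩
          · have h1 : c102 ≠ 0 := by rw [h102]; exact hnzm'
            exact ⟨fun hz => h1 (by linarith), h1⟩
        obtain ⟨m'', hm'', hmz''⟩ := hzero 0
        have hdm'' := hdeg m'' hm''
        have hnzm'' := MvPolynomial.mem_support_iff.mp hm''
        have key3 : c021 ≠ 0 := by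
          rcases enumz0 m'' hdm'' hmz'' with rfl|rfl|rfl|rfl
          · exact absurd (by rw [← h030]; exact hv) hnzm''
          · exact absurd (by rw [← h003]; exact hw) hnzm''
          · rw [h021]; exact hnzm''
          · have h1 : c012 ≠ 0 := by rw [h012]; exact hnzm''
            exact fun hz => h1 (by linarith)
        apply not_five p hcard {e3 ![2,1,0], e3 ![1,2,0], e3 ![2,0,1], e3 ![1,0,2], e3 ![0,2,1]}
          (card_five_e3 _ _ _ _ _ (by refine ⟨⟨?_,?_,?_,?_⟩,⟨?_,?_,?_⟩,⟨?_,?_⟩,?_⟩ <;> decide))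
        intro x hx
        simp only [Finset.mem_insert, Finset.mem_singleton] at hx
        rcases hx with rfl|rfl|rfl|rfl|rfl
        · exact MvPolynomial.mem_support_iff.mpr (by rw [← h210]; exact key1.1)
        · exact MvPolynomial.mem_support_iff.mpr (by rw [← h120]; exact key1.2)
        · exact MvPolynomial.mem_support_iff.mpr (by rw [← h201]; exact key2.1)
        · exact MvPolynomial.mem_support_iff.mpr (by rw [← h102]; exact key2.2)
        · exact MvPolynomial.mem_support_iff.mpr (by rw [← h021]; exact key3)
      ·
        obtain ⟨m, hm, hmz⟩ := hzero 2
        have hdm := hdeg m hm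
        have hnzm := MvPolynomial.mem_support_iff.mp hm
        have key : c210 ≠ 0 ∧ c120 ≠ 0 := by
          rcases enumz2 m hdm hmz with rfl|rfl|rfl|rfl
          · exact absurd (by rw [← h300]; exact hu) hnzm
          · exact absurd (by rw [← h030]; exact hv) hnzm
          · have h1 : c210 ≠ 0 := by rw [h210]; exact hnzm
            exact ⟨h1, fun hz => h1 (by linarith)⟩
          · have h1 : c120 ≠ 0 := by rw [h120]; exact hnzm
            exact ⟨fun hz => h1 (by linarith), h1⟩
        obtain ⟨n, hnmem, hS⟩ := rest_one p hcard (e3 ![0,0,3]) (e3 ![2,1,0]) (e3 ![1,2,0])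
          (by simp only [ne_eq, e3_inj]; decide) (by simp only [ne_eq, e3_inj]; decide)
          (by simp only [ne_eq, e3_inj]; decide)
          (MvPolynomial.mem_support_iff.mpr (by rw [← h003]; exact hw)) (MvPolynomial.mem_support_iff.mpr (by rw [← h210]; exact key.1)) (MvPolynomial.mem_support_iff.mpr (by rw [← h120]; exact key.2))
        have hd1 : n 0 + n 1 + n 2 = 3 := hdeg n (by rw [hS]; simp)
        have hc0 := hcol 0
        have hc1 := hcol 1
        have hc2 := hcol 2
        rw [hS, Finset.sum_insert hnmem,
            Finset.sum_insert (by simp only [Finset.mem_insert, Finset.mem_singleton, e3_inj]; decide),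
            Finset.sum_insert (by simp only [Finset.mem_singleton, e3_inj]; decide),
            Finset.sum_singleton] at hc0 hc1 hc2
        simp only [e3_apply, Matrix.cons_val_zero, Matrix.cons_val_one, Matrix.head_cons, Matrix.cons_val_two, Matrix.tail_cons] at hc0 hc1 hc2
        exfalso
        have hn111 : n = e3 ![1,1,1] := by
          rw [e3_eq_iff]
          simp only [Matrix.cons_val_zero, Matrix.cons_val_one, Matrix.head_cons, Matrix.cons_val_two, Matrix.tail_cons]
          omega
        rw [hn111] at hS
        have z201 : c201 = 0 := by
          rw [h201]
          apply MvPolynomial.notMem_support_iff.mp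
          rw [hS]
          simp only [Finset.mem_insert, Finset.mem_singleton, e3_inj]
          decide
        have z102 : c102 = 0 := by
          rw [h102]
          apply MvPolynomial.notMem_support_iff.mp
          rw [hS]
          simp only [Finset.mem_insert, Finset.mem_singleton, e3_inj]
          decide
        exact hw (by linarith)
    · by_cases hw : c003 = 0
      ·
        obtain ⟨m, hm, hmz⟩ := hzero 1
        have hdm := hdeg m hm
        have hnzm := MvPolynomial.mem_support_iff.mp hm
        have key : c201 ≠ 0 ∧ c102 ≠ 0 := by
          rcases enumz1 m hdm hmz with rfl|rfl|rfl|rfl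
          · exact absurd (by rw [← h300]; exact hu) hnzm
          · exact absurd (by rw [← h003]; exact hw) hnzm
          · have h1 : c201 ≠ 0 := by rw [h201]; exact hnzm
            exact ⟨h1, fun hz => h1 (by linarith)⟩
          · have h1 : c102 ≠ 0 := by rw [h102]; exact hnzm
            exact ⟨fun hz => h1 (by linarith), h1⟩
        obtain ⟨n, hnmem, hS⟩ := rest_one p hcard (e3 ![0,3,0]) (e3 ![2,0,1]) (e3 ![1,0,2])
          (by simp only [ne_eq, e3_inj]; decide) (by simp only [ne_eq, e3_inj]; decide)
          (by simp only [ne_eq, e3_inj]; decide)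
          (MvPolynomial.mem_support_iff.mpr (by rw [← h030]; exact hv)) (MvPolynomial.mem_support_iff.mpr (by rw [← h201]; exact key.1)) (MvPolynomial.mem_support_iff.mpr (by rw [← h102]; exact key.2))
        have hd1 : n 0 + n 1 + n 2 = 3 := hdeg n (by rw [hS]; simp)
        have hc0 := hcol 0
        have hc1 := hcol 1
        have hc2 := hcol 2
        rw [hS, Finset.sum_insert hnmem,
            Finset.sum_insert (by simp only [Finset.mem_insert, Finset.mem_singleton, e3_inj]; decide),
            Finset.sum_insert (by simp only [Finset.mem_singleton, e3_inj]; decide),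
            Finset.sum_singleton] at hc0 hc1 hc2
        simp only [e3_apply, Matrix.cons_val_zero, Matrix.cons_val_one, Matrix.head_cons, Matrix.cons_val_two, Matrix.tail_cons] at hc0 hc1 hc2
        exfalso
        have hn111 : n = e3 ![1,1,1] := by
          rw [e3_eq_iff]
          simp only [Matrix.cons_val_zero, Matrix.cons_val_one, Matrix.head_cons, Matrix.cons_val_two, Matrix.tail_cons]
          omega
        rw [hn111] at hS
        have z021 : c021 = 0 := by
          rw [h021]
          apply MvPolynomial.notMem_support_iff.mp
          rw [hS]
          simp only [Finset.mem_insert, Finset.mem_singleton, e3_inj]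
          decide
        have z012 : c012 = 0 := by
          rw [h012]
          apply MvPolynomial.notMem_support_iff.mp
          rw [hS]
          simp only [Finset.mem_insert, Finset.mem_singleton, e3_inj]
          decide
        exact hv (by linarith)
      ·
        obtain ⟨n1, n2, hne, hn1m, hn2m, hS⟩ := rest_two p hcard (e3 ![0,3,0]) (e3 ![0,0,3])
          (by simp only [ne_eq, e3_inj]; decide) (MvPolynomial.mem_support_iff.mpr (by rw [← h030]; exact hv)) (MvPolynomial.mem_support_iff.mpr (by rw [← h003]; exact hw))
        have hn1' : n1 ∉ insert n2 ({e3 ![0,3,0], e3 ![0,0,3]} : Finset (Fin 3 →₀ ℕ)) := by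
          simp only [Finset.mem_insert, Finset.mem_singleton] at hn1m ⊢
          push_neg at hn1m ⊢
          exact ⟨hne, hn1m.1, hn1m.2⟩
        have hd1 : n1 0 + n1 1 + n1 2 = 3 := hdeg n1 (by rw [hS]; simp)
        have hd2 : n2 0 + n2 1 + n2 2 = 3 := hdeg n2 (by rw [hS]; simp)
        have hc0 := hcol 0
        have hc1 := hcol 1
        have hc2 := hcol 2
        rw [hS, Finset.sum_insert hn1', Finset.sum_insert hn2m,
            Finset.sum_insert (by simp only [Finset.mem_singleton, e3_inj]; decide),
            Finset.sum_singleton] at hc0 hc1 hc2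
        simp only [e3_apply, Matrix.cons_val_zero, Matrix.cons_val_one, Matrix.head_cons, Matrix.cons_val_two, Matrix.tail_cons] at hc0 hc1 hc2
        have hs0 : n1 1 = 0 ∨ n1 1 = 1 := by omega
        have hs1 : n1 2 = 0 ∨ n1 2 = 1 := by omega
        rcases hs0 with hx0|hx0 <;> rcases hs1 with hx1|hx1
        · exfalso
          have hn1e : n1 = e3 ![3,0,0] := by
            rw [e3_eq_iff]
            simp only [Matrix.cons_val_zero, Matrix.cons_val_one, Matrix.head_cons, Matrix.cons_val_two, Matrix.tail_cons]
            omega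
          have hn1S : n1 ∈ p.support := by rw [hS]; simp
          rw [hn1e] at hn1S
          exact (MvPolynomial.mem_support_iff.mp hn1S) (by rw [← h300]; exact hu)
        · exfalso
          have hn1e : n1 = e3 ![2,0,1] := by
            rw [e3_eq_iff]
            simp only [Matrix.cons_val_zero, Matrix.cons_val_one, Matrix.head_cons, Matrix.cons_val_two, Matrix.tail_cons]
            omega
          have hn2e : n2 = e3 ![2,1,0] := by
            rw [e3_eq_iff]
            simp only [Matrix.cons_val_zero, Matrix.cons_val_one, Matrix.head_cons, Matrix.cons_val_two, Matrix.tail_cons]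
            omega
          rw [hn1e, hn2e] at hS
          have z120 : c120 = 0 := by
            rw [h120]
            apply MvPolynomial.notMem_support_iff.mp
            rw [hS]
            simp only [Finset.mem_insert, Finset.mem_singleton, e3_inj]
            decide
          have z021 : c021 = 0 := by
            rw [h021]
            apply MvPolynomial.notMem_support_iff.mp
            rw [hS]
            simp only [Finset.mem_insert, Finset.mem_singleton, e3_inj]
            decide
          have z102 : c102 = 0 := by
            rw [h102]
            apply MvPolynomial.notMem_support_iff.mp
            rw [hS]
            simp only [Finset.mem_insert, Finset.mem_singleton, e3_inj]
            decide
          have z012 : c012 = 0 := by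
            rw [h012]
            apply MvPolynomial.notMem_support_iff.mp
            rw [hS]
            simp only [Finset.mem_insert, Finset.mem_singleton, e3_inj]
            decide
          have z111 : c111 = 0 := by
            rw [h111]
            apply MvPolynomial.notMem_support_iff.mp
            rw [hS]
            simp only [Finset.mem_insert, Finset.mem_singleton, e3_inj]
            decide
          exact hw (by linarith)
        · exfalso
          have hn1e : n1 = e3 ![2,1,0] := by
            rw [e3_eq_iff]
            simp only [Matrix.cons_val_zero, Matrix.cons_val_one, Matrix.head_cons, Matrix.cons_val_two, Matrix.tail_cons]
            omega
          have hn2e : n2 = e3 ![2,0,1] := by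
            rw [e3_eq_iff]
            simp only [Matrix.cons_val_zero, Matrix.cons_val_one, Matrix.head_cons, Matrix.cons_val_two, Matrix.tail_cons]
            omega
          rw [hn1e, hn2e] at hS
          have z120 : c120 = 0 := by
            rw [h120]
            apply MvPolynomial.notMem_support_iff.mp
            rw [hS]
            simp only [Finset.mem_insert, Finset.mem_singleton, e3_inj]
            decide
          have z021 : c021 = 0 := by
            rw [h021]
            apply MvPolynomial.notMem_support_iff.mp
            rw [hS]
            simp only [Finset.mem_insert, Finset.mem_singleton, e3_inj]
            decide
          have z102 : c102 = 0 := by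
            rw [h102]
            apply MvPolynomial.notMem_support_iff.mp
            rw [hS]
            simp only [Finset.mem_insert, Finset.mem_singleton, e3_inj]
            decide
          have z012 : c012 = 0 := by
            rw [h012]
            apply MvPolynomial.notMem_support_iff.mp
            rw [hS]
            simp only [Finset.mem_insert, Finset.mem_singleton, e3_inj]
            decide
          have z111 : c111 = 0 := by
            rw [h111]
            apply MvPolynomial.notMem_support_iff.mp
            rw [hS]
            simp only [Finset.mem_insert, Finset.mem_singleton, e3_inj]
            decide
          exact hw (by linarith)
        · exfalso
          have hn2e : n2 = e3 ![3,0,0] := by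
            rw [e3_eq_iff]
            simp only [Matrix.cons_val_zero, Matrix.cons_val_one, Matrix.head_cons, Matrix.cons_val_two, Matrix.tail_cons]
            omega
          have hn2S : n2 ∈ p.support := by rw [hS]; simp
          rw [hn2e] at hn2S
          exact (MvPolynomial.mem_support_iff.mp hn2S) (by rw [← h300]; exact hu)
  · by_cases hv : c030 = 0
    · by_cases hw : c003 = 0
      ·
        obtain ⟨m, hm, hmz⟩ := hzero 0
        have hdm := hdeg m hm
        have hnzm := MvPolynomial.mem_support_iff.mp hm
        have key : c021 ≠ 0 ∧ c012 ≠ 0 := by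
          rcases enumz0 m hdm hmz with rfl|rfl|rfl|rfl
          · exact absurd (by rw [← h030]; exact hv) hnzm
          · exact absurd (by rw [← h003]; exact hw) hnzm
          · have h1 : c021 ≠ 0 := by rw [h021]; exact hnzm
            exact ⟨h1, fun hz => h1 (by linarith)⟩
          · have h1 : c012 ≠ 0 := by rw [h012]; exact hnzm
            exact ⟨fun hz => h1 (by linarith), h1⟩
        obtain ⟨n, hnmem, hS⟩ := rest_one p hcard (e3 ![3,0,0]) (e3 ![0,2,1]) (e3 ![0,1,2])
          (by simp only [ne_eq, e3_inj]; decide) (by simp only [ne_eq, e3_inj]; decide)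
          (by simp only [ne_eq, e3_inj]; decide)
          (MvPolynomial.mem_support_iff.mpr (by rw [← h300]; exact hu)) (MvPolynomial.mem_support_iff.mpr (by rw [← h021]; exact key.1)) (MvPolynomial.mem_support_iff.mpr (by rw [← h012]; exact key.2))
        have hd1 : n 0 + n 1 + n 2 = 3 := hdeg n (by rw [hS]; simp)
        have hc0 := hcol 0
        have hc1 := hcol 1
        have hc2 := hcol 2
        rw [hS, Finset.sum_insert hnmem,
            Finset.sum_insert (by simp only [Finset.mem_insert, Finset.mem_singleton, e3_inj]; decide),
            Finset.sum_insert (by simp only [Finset.mem_singleton, e3_inj]; decide),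
            Finset.sum_singleton] at hc0 hc1 hc2
        simp only [e3_apply, Matrix.cons_val_zero, Matrix.cons_val_one, Matrix.head_cons, Matrix.cons_val_two, Matrix.tail_cons] at hc0 hc1 hc2
        exfalso
        have hn111 : n = e3 ![1,1,1] := by
          rw [e3_eq_iff]
          simp only [Matrix.cons_val_zero, Matrix.cons_val_one, Matrix.head_cons, Matrix.cons_val_two, Matrix.tail_cons]
          omega
        rw [hn111] at hS
        have z201 : c201 = 0 := by
          rw [h201]
          apply MvPolynomial.notMem_support_iff.mp
          rw [hS]
          simp only [Finset.mem_insert, Finset.mem_singleton, e3_inj]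
          decide
        have z102 : c102 = 0 := by
          rw [h102]
          apply MvPolynomial.notMem_support_iff.mp
          rw [hS]
          simp only [Finset.mem_insert, Finset.mem_singleton, e3_inj]
          decide
        exact hu (by linarith)
      ·
        obtain ⟨n1, n2, hne, hn1m, hn2m, hS⟩ := rest_two p hcard (e3 ![3,0,0]) (e3 ![0,0,3])
          (by simp only [ne_eq, e3_inj]; decide) (MvPolynomial.mem_support_iff.mpr (by rw [← h300]; exact hu)) (MvPolynomial.mem_support_iff.mpr (by rw [← h003]; exact hw))
        have hn1' : n1 ∉ insert n2 ({e3 ![3,0,0], e3 ![0,0,3]} : Finset (Fin 3 →₀ ℕ)) := by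
          simp only [Finset.mem_insert, Finset.mem_singleton] at hn1m ⊢
          push_neg at hn1m ⊢
          exact ⟨hne, hn1m.1, hn1m.2⟩
        have hd1 : n1 0 + n1 1 + n1 2 = 3 := hdeg n1 (by rw [hS]; simp)
        have hd2 : n2 0 + n2 1 + n2 2 = 3 := hdeg n2 (by rw [hS]; simp)
        have hc0 := hcol 0
        have hc1 := hcol 1
        have hc2 := hcol 2
        rw [hS, Finset.sum_insert hn1', Finset.sum_insert hn2m,
            Finset.sum_insert (by simp only [Finset.mem_singleton, e3_inj]; decide),
            Finset.sum_singleton] at hc0 hc1 hc2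
        simp only [e3_apply, Matrix.cons_val_zero, Matrix.cons_val_one, Matrix.head_cons, Matrix.cons_val_two, Matrix.tail_cons] at hc0 hc1 hc2
        have hs0 : n1 0 = 0 ∨ n1 0 = 1 := by omega
        have hs1 : n1 2 = 0 ∨ n1 2 = 1 := by omega
        rcases hs0 with hx0|hx0 <;> rcases hs1 with hx1|hx1
        · exfalso
          have hn1e : n1 = e3 ![0,3,0] := by
            rw [e3_eq_iff]
            simp only [Matrix.cons_val_zero, Matrix.cons_val_one, Matrix.head_cons, Matrix.cons_val_two, Matrix.tail_cons]
            omega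
          have hn1S : n1 ∈ p.support := by rw [hS]; simp
          rw [hn1e] at hn1S
          exact (MvPolynomial.mem_support_iff.mp hn1S) (by rw [← h030]; exact hv)
        · exfalso
          have hn1e : n1 = e3 ![0,2,1] := by
            rw [e3_eq_iff]
            simp only [Matrix.cons_val_zero, Matrix.cons_val_one, Matrix.head_cons, Matrix.cons_val_two, Matrix.tail_cons]
            omega
          have hn2e : n2 = e3 ![1,2,0] := by
            rw [e3_eq_iff]
            simp only [Matrix.cons_val_zero, Matrix.cons_val_one, Matrix.head_cons, Matrix.cons_val_two, Matrix.tail_cons]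
            omega
          rw [hn1e, hn2e] at hS
          have z210 : c210 = 0 := by
            rw [h210]
            apply MvPolynomial.notMem_support_iff.mp
            rw [hS]
            simp only [Finset.mem_insert, Finset.mem_singleton, e3_inj]
            decide
          have z201 : c201 = 0 := by
            rw [h201]
            apply MvPolynomial.notMem_support_iff.mp
            rw [hS]
            simp only [Finset.mem_insert, Finset.mem_singleton, e3_inj]
            decide
          have z102 : c102 = 0 := by
            rw [h102]
            apply MvPolynomial.notMem_support_iff.mp
            rw [hS]
            simp only [Finset.mem_insert, Finset.mem_singleton, e3_inj]
            decide
          have z012 : c012 = 0 := by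
            rw [h012]
            apply MvPolynomial.notMem_support_iff.mp
            rw [hS]
            simp only [Finset.mem_insert, Finset.mem_singleton, e3_inj]
            decide
          have z111 : c111 = 0 := by
            rw [h111]
            apply MvPolynomial.notMem_support_iff.mp
            rw [hS]
            simp only [Finset.mem_insert, Finset.mem_singleton, e3_inj]
            decide
          exact hw (by linarith)
        · exfalso
          have hn1e : n1 = e3 ![1,2,0] := by
            rw [e3_eq_iff]
            simp only [Matrix.cons_val_zero, Matrix.cons_val_one, Matrix.head_cons, Matrix.cons_val_two, Matrix.tail_cons]
            omega
          have hn2e : n2 = e3 ![0,2,1] := by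
            rw [e3_eq_iff]
            simp only [Matrix.cons_val_zero, Matrix.cons_val_one, Matrix.head_cons, Matrix.cons_val_two, Matrix.tail_cons]
            omega
          rw [hn1e, hn2e] at hS
          have z210 : c210 = 0 := by
            rw [h210]
            apply MvPolynomial.notMem_support_iff.mp
            rw [hS]
            simp only [Finset.mem_insert, Finset.mem_singleton, e3_inj]
            decide
          have z201 : c201 = 0 := by
            rw [h201]
            apply MvPolynomial.notMem_support_iff.mp
            rw [hS]
            simp only [Finset.mem_insert, Finset.mem_singleton, e3_inj]
            decide
          have z102 : c102 = 0 := by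
            rw [h102]
            apply MvPolynomial.notMem_support_iff.mp
            rw [hS]
            simp only [Finset.mem_insert, Finset.mem_singleton, e3_inj]
            decide
          have z012 : c012 = 0 := by
            rw [h012]
            apply MvPolynomial.notMem_support_iff.mp
            rw [hS]
            simp only [Finset.mem_insert, Finset.mem_singleton, e3_inj]
            decide
          have z111 : c111 = 0 := by
            rw [h111]
            apply MvPolynomial.notMem_support_iff.mp
            rw [hS]
            simp only [Finset.mem_insert, Finset.mem_singleton, e3_inj]
            decide
          exact hw (by linarith)
        · exfalso
          have hn2e : n2 = e3 ![0,3,0] := by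
            rw [e3_eq_iff]
            simp only [Matrix.cons_val_zero, Matrix.cons_val_one, Matrix.head_cons, Matrix.cons_val_two, Matrix.tail_cons]
            omega
          have hn2S : n2 ∈ p.support := by rw [hS]; simp
          rw [hn2e] at hn2S
          exact (MvPolynomial.mem_support_iff.mp hn2S) (by rw [← h030]; exact hv)
    · by_cases hw : c003 = 0
      ·
        obtain ⟨n1, n2, hne, hn1m, hn2m, hS⟩ := rest_two p hcard (e3 ![3,0,0]) (e3 ![0,3,0])
          (by simp only [ne_eq, e3_inj]; decide) (MvPolynomial.mem_support_iff.mpr (by rw [← h300]; exact hu)) (MvPolynomial.mem_support_iff.mpr (by rw [← h030]; exact hv))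
        have hn1' : n1 ∉ insert n2 ({e3 ![3,0,0], e3 ![0,3,0]} : Finset (Fin 3 →₀ ℕ)) := by
          simp only [Finset.mem_insert, Finset.mem_singleton] at hn1m ⊢
          push_neg at hn1m ⊢
          exact ⟨hne, hn1m.1, hn1m.2⟩
        have hd1 : n1 0 + n1 1 + n1 2 = 3 := hdeg n1 (by rw [hS]; simp)
        have hd2 : n2 0 + n2 1 + n2 2 = 3 := hdeg n2 (by rw [hS]; simp)
        have hc0 := hcol 0
        have hc1 := hcol 1
        have hc2 := hcol 2
        rw [hS, Finset.sum_insert hn1', Finset.sum_insert hn2m,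
            Finset.sum_insert (by simp only [Finset.mem_singleton, e3_inj]; decide),
            Finset.sum_singleton] at hc0 hc1 hc2
        simp only [e3_apply, Matrix.cons_val_zero, Matrix.cons_val_one, Matrix.head_cons, Matrix.cons_val_two, Matrix.tail_cons] at hc0 hc1 hc2
        have hs0 : n1 0 = 0 ∨ n1 0 = 1 := by omega
        have hs1 : n1 1 = 0 ∨ n1 1 = 1 := by omega
        rcases hs0 with hx0|hx0 <;> rcases hs1 with hx1|hx1
        · exfalso
          have hn1e : n1 = e3 ![0,0,3] := by
            rw [e3_eq_iff]
            simp only [Matrix.cons_val_zero, Matrix.cons_val_one, Matrix.head_cons, Matrix.cons_val_two, Matrix.tail_cons]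
            omega
          have hn1S : n1 ∈ p.support := by rw [hS]; simp
          rw [hn1e] at hn1S
          exact (MvPolynomial.mem_support_iff.mp hn1S) (by rw [← h003]; exact hw)
        · exfalso
          have hn1e : n1 = e3 ![0,1,2] := by
            rw [e3_eq_iff]
            simp only [Matrix.cons_val_zero, Matrix.cons_val_one, Matrix.head_cons, Matrix.cons_val_two, Matrix.tail_cons]
            omega
          have hn2e : n2 = e3 ![1,0,2] := by
            rw [e3_eq_iff]
            simp only [Matrix.cons_val_zero, Matrix.cons_val_one, Matrix.head_cons, Matrix.cons_val_two, Matrix.tail_cons]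
            omega
          rw [hn1e, hn2e] at hS
          have z210 : c210 = 0 := by
            rw [h210]
            apply MvPolynomial.notMem_support_iff.mp
            rw [hS]
            simp only [Finset.mem_insert, Finset.mem_singleton, e3_inj]
            decide
          have z120 : c120 = 0 := by
            rw [h120]
            apply MvPolynomial.notMem_support_iff.mp
            rw [hS]
            simp only [Finset.mem_insert, Finset.mem_singleton, e3_inj]
            decide
          have z201 : c201 = 0 := by
            rw [h201]
            apply MvPolynomial.notMem_support_iff.mp
            rw [hS]
            simp only [Finset.mem_insert, Finset.mem_singleton, e3_inj]
            decide
          have z021 : c021 = 0 := by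
            rw [h021]
            apply MvPolynomial.notMem_support_iff.mp
            rw [hS]
            simp only [Finset.mem_insert, Finset.mem_singleton, e3_inj]
            decide
          have z111 : c111 = 0 := by
            rw [h111]
            apply MvPolynomial.notMem_support_iff.mp
            rw [hS]
            simp only [Finset.mem_insert, Finset.mem_singleton, e3_inj]
            decide
          exact hu (by linarith)
        · exfalso
          have hn1e : n1 = e3 ![1,0,2] := by
            rw [e3_eq_iff]
            simp only [Matrix.cons_val_zero, Matrix.cons_val_one, Matrix.head_cons, Matrix.cons_val_two, Matrix.tail_cons]
            omega
          have hn2e : n2 = e3 ![0,1,2] := by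
            rw [e3_eq_iff]
            simp only [Matrix.cons_val_zero, Matrix.cons_val_one, Matrix.head_cons, Matrix.cons_val_two, Matrix.tail_cons]
            omega
          rw [hn1e, hn2e] at hS
          have z210 : c210 = 0 := by
            rw [h210]
            apply MvPolynomial.notMem_support_iff.mp
            rw [hS]
            simp only [Finset.mem_insert, Finset.mem_singleton, e3_inj]
            decide
          have z120 : c120 = 0 := by
            rw [h120]
            apply MvPolynomial.notMem_support_iff.mp
            rw [hS]
            simp only [Finset.mem_insert, Finset.mem_singleton, e3_inj]
            decide
          have z201 : c201 = 0 := by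
            rw [h201]
            apply MvPolynomial.notMem_support_iff.mp
            rw [hS]
            simp only [Finset.mem_insert, Finset.mem_singleton, e3_inj]
            decide
          have z021 : c021 = 0 := by
            rw [h021]
            apply MvPolynomial.notMem_support_iff.mp
            rw [hS]
            simp only [Finset.mem_insert, Finset.mem_singleton, e3_inj]
            decide
          have z111 : c111 = 0 := by
            rw [h111]
            apply MvPolynomial.notMem_support_iff.mp
            rw [hS]
            simp only [Finset.mem_insert, Finset.mem_singleton, e3_inj]
            decide
          exact hu (by linarith)
        · exfalso
          have hn2e : n2 = e3 ![0,0,3] := by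
            rw [e3_eq_iff]
            simp only [Matrix.cons_val_zero, Matrix.cons_val_one, Matrix.head_cons, Matrix.cons_val_two, Matrix.tail_cons]
            omega
          have hn2S : n2 ∈ p.support := by rw [hS]; simp
          rw [hn2e] at hn2S
          exact (MvPolynomial.mem_support_iff.mp hn2S) (by rw [← h003]; exact hw)
      ·
        obtain ⟨n, hnmem, hS⟩ := rest_one p hcard (e3 ![3,0,0]) (e3 ![0,3,0]) (e3 ![0,0,3])
          (by simp only [ne_eq, e3_inj]; decide) (by simp only [ne_eq, e3_inj]; decide)
          (by simp only [ne_eq, e3_inj]; decide)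
          (MvPolynomial.mem_support_iff.mpr (by rw [← h300]; exact hu)) (MvPolynomial.mem_support_iff.mpr (by rw [← h030]; exact hv)) (MvPolynomial.mem_support_iff.mpr (by rw [← h003]; exact hw))
        have hd1 : n 0 + n 1 + n 2 = 3 := hdeg n (by rw [hS]; simp)
        have hc0 := hcol 0
        have hc1 := hcol 1
        have hc2 := hcol 2
        rw [hS, Finset.sum_insert hnmem,
            Finset.sum_insert (by simp only [Finset.mem_insert, Finset.mem_singleton, e3_inj]; decide),
            Finset.sum_insert (by simp only [Finset.mem_singleton, e3_inj]; decide),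
            Finset.sum_singleton] at hc0 hc1 hc2
        simp only [e3_apply, Matrix.cons_val_zero, Matrix.cons_val_one, Matrix.head_cons, Matrix.cons_val_two, Matrix.tail_cons] at hc0 hc1 hc2
        have hn111 : n = e3 ![1,1,1] := by
          rw [e3_eq_iff]
          simp only [Matrix.cons_val_zero, Matrix.cons_val_one, Matrix.head_cons, Matrix.cons_val_two, Matrix.tail_cons]
          omega
        rw [hn111] at hS
        have z210 : c210 = 0 := by
          rw [h210]
          apply MvPolynomial.notMem_support_iff.mp
          rw [hS]
          simp only [Finset.mem_insert, Finset.mem_singleton, e3_inj]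
          decide
        have z201 : c201 = 0 := by
          rw [h201]
          apply MvPolynomial.notMem_support_iff.mp
          rw [hS]
          simp only [Finset.mem_insert, Finset.mem_singleton, e3_inj]
          decide
        have z120 : c120 = 0 := by
          rw [h120]
          apply MvPolynomial.notMem_support_iff.mp
          rw [hS]
          simp only [Finset.mem_insert, Finset.mem_singleton, e3_inj]
          decide
        have z021 : c021 = 0 := by
          rw [h021]
          apply MvPolynomial.notMem_support_iff.mp
          rw [hS]
          simp only [Finset.mem_insert, Finset.mem_singleton, e3_inj]
          decide
        have z102 : c102 = 0 := by
          rw [h102]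
          apply MvPolynomial.notMem_support_iff.mp
          rw [hS]
          simp only [Finset.mem_insert, Finset.mem_singleton, e3_inj]
          decide
        have z012 : c012 = 0 := by
          rw [h012]
          apply MvPolynomial.notMem_support_iff.mp
          rw [hS]
          simp only [Finset.mem_insert, Finset.mem_singleton, e3_inj]
          decide
        have e1 : c300 = c003 := by linarith
        have e2 : c030 = c003 := by linarith
        have e4 : c111 = -(3*c003) := by linarith
        refine ⟨Equiv.refl (Fin 3), c003, hw, Or.inl ?_⟩
        rw [hrep, z210, z201, z120, z021, z102, z012, e1, e2, e4]
        simp only [mono_e3, Matrix.cons_val_zero, Matrix.cons_val_one, Matrix.head_cons, Matrix.cons_val_two, Matrix.tail_cons, map_neg, map_zero, map_add, map_mul,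
          map_pow, map_ofNat, rename_C, rename_X, Equiv.coe_refl, rename_id, id_eq, AlgHom.id_apply]
        ring


end Stmt5Aux

open Stmt5Aux

theorem stmt_5 (p : MvPolynomial (Fin 3) ℝ) (hp : p ≠ 0)
    (hhom : ∃ d, p.IsHomogeneous d)
    (hcard : p.support.card = 4)
    (hnocommon : ¬ ∃ m : Fin 3 →₀ ℕ, m ≠ 0 ∧ ∀ s ∈ p.support, m ≤ s)
    (hvan : ∀ x y t : ℝ, x + y + t = 0 → eval ![x, y, t] p = 0) :
    ∃ (σ : Equiv.Perm (Fin 3)) (c : ℝ), c ≠ 0 ∧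
      (rename σ p = C c * (X 0 ^ 3 + X 1 ^ 3 + X 2 ^ 3 - C 3 * X 0 * X 1 * X 2) ∨
       rename σ p = C c * (X 0 ^ 2 + X 1 ^ 2 + C 2 * X 0 * X 1 - X 2 ^ 2) ∨
       rename σ p = C c * (X 0 ^ 2 + X 0 * X 1 - X 1 * X 2 - X 2 ^ 2)) := by
  classical
  obtain ⟨d, hhom⟩ := hhom
  have hvan' : ∀ g : Fin 3 → ℝ, g 0 + g 1 + g 2 = 0 → eval g p = 0 := by
    intro g hg
    have hgv : g = ![g 0, g 1, g 2] := by
      funext v; fin_cases v <;> simp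
    rw [hgv]
    exact hvan _ _ _ hg
  have hlam : ∀ m ∈ p.support, coeff m p ≠ 0 := fun m hm => MvPolynomial.mem_support_iff.mp hm
  have hdeg : ∀ m ∈ p.support, m 0 + m 1 + m 2 = d := fun m hm => degsum hhom hm
  have hzero : ∀ i : Fin 3, ∃ m ∈ p.support, m i = 0 := by
    intro i
    by_contra hc
    push_neg at hc
    refine hnocommon ⟨Finsupp.single i 1, by simp [Finsupp.single_eq_zero], ?_⟩
    intro s hs
    rw [Finsupp.single_le_iff]
    have := hc s hs
    omega
  have hinj : ∀ m ∈ p.support, ∀ m' ∈ p.support,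
      (m 0 = m' 0 ∧ m 2 = m' 2) ∨ (m 1 = m' 1 ∧ m 0 = m' 0) ∨ (m 2 = m' 2 ∧ m 1 = m' 1) → m = m' := by
    intro m hm m' hm' h
    have e1 := hdeg m hm
    have e2 := hdeg m' hm'
    rw [eq_e3 m, eq_e3 m', e3_inj]
    funext v
    fin_cases v <;> simp <;> omega
  have hB1 : 2 * d + 2 ≤ ∑ m ∈ p.support, (m 2 + 1) := by
    apply keyB p.support (fun m => coeff m p) (fun m => m 0) (fun m => m 2) d hcard hlam
    · intro m hm m' hm' h1 h2
      exact hinj m hm m' hm' (Or.inl ⟨h1, h2⟩)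
    · intro m hm; have := hdeg m hm; omega
    · obtain ⟨m, hm, h0⟩ := hzero 0; exact ⟨m, hm, h0⟩
    · obtain ⟨m, hm, h0⟩ := hzero 1; exact ⟨m, hm, by have := hdeg m hm; omega⟩
    · intro n; simpa [trm] using hID₁ p hvan' n
  have hB2 : 2 * d + 2 ≤ ∑ m ∈ p.support, (m 0 + 1) := by
    apply keyB p.support (fun m => coeff m p) (fun m => m 1) (fun m => m 0) d hcard hlam
    · intro m hm m' hm' h1 h2
      exact hinj m hm m' hm' (Or.inr (Or.inl ⟨h1, h2⟩))
    · intro m hm; have := hdeg m hm; omega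
    · obtain ⟨m, hm, h0⟩ := hzero 1; exact ⟨m, hm, h0⟩
    · obtain ⟨m, hm, h0⟩ := hzero 2; exact ⟨m, hm, by have := hdeg m hm; omega⟩
    · intro n; simpa [trm] using hID₂ p hvan' n
  have hB3 : 2 * d + 2 ≤ ∑ m ∈ p.support, (m 1 + 1) := by
    apply keyB p.support (fun m => coeff m p) (fun m => m 2) (fun m => m 1) d hcard hlam
    · intro m hm m' hm' h1 h2
      exact hinj m hm m' hm' (Or.inr (Or.inr ⟨h1, h2⟩))
    · intro m hm; have := hdeg m hm; omega
    · obtain ⟨m, hm, h0⟩ := hzero 2; exact ⟨m, hm, h0⟩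
    · obtain ⟨m, hm, h0⟩ := hzero 0; exact ⟨m, hm, by have := hdeg m hm; omega⟩
    · intro n; simpa [trm] using hID₃ p hvan' n
  have hs0 : ∑ m ∈ p.support, (m 0 + 1) = (∑ m ∈ p.support, m 0) + 4 := by
    rw [Finset.sum_add_distrib, Finset.sum_const, hcard, smul_eq_mul]
  have hs1 : ∑ m ∈ p.support, (m 1 + 1) = (∑ m ∈ p.support, m 1) + 4 := by
    rw [Finset.sum_add_distrib, Finset.sum_const, hcard, smul_eq_mul]
  have hs2 : ∑ m ∈ p.support, (m 2 + 1) = (∑ m ∈ p.support, m 2) + 4 := by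
    rw [Finset.sum_add_distrib, Finset.sum_const, hcard, smul_eq_mul]
  have htot : (∑ m ∈ p.support, m 0) + (∑ m ∈ p.support, m 1) + (∑ m ∈ p.support, m 2) = 4 * d := by
    rw [← Finset.sum_add_distrib, ← Finset.sum_add_distrib]
    rw [Finset.sum_congr rfl hdeg, Finset.sum_const, hcard, smul_eq_mul]
  have hd3 : d ≤ 3 := by omega
  have hd2 : 2 ≤ d := by
    by_contra hlt
    push_neg at hlt
    interval_cases d
    · have hsub : p.support ⊆ {e3 ![0,0,0]} := fun m hm => enum0 m (hdeg m hm)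
      have := Finset.card_le_card hsub
      simp [hcard] at this
    · have hsub : p.support ⊆ {e3 ![1,0,0], e3 ![0,1,0], e3 ![0,0,1]} :=
        fun m hm => enum1 m (hdeg m hm)
      have h1 := Finset.card_le_card hsub
      have h2 := card_le_three (e3 ![1,0,0]) (e3 ![0,1,0]) (e3 ![0,0,1])
      omega
  interval_cases d
  · -- d = 2
    exact deg2 p hcard hvan' hdeg
  · -- d = 3
    have hcol : ∀ i : Fin 3, ∑ m ∈ p.support, m i = 4 := by
      have h0 : ∑ m ∈ p.support, m 0 = 4 := by omega
      have h1 : ∑ m ∈ p.support, m 1 = 4 := by omega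
      have h2 : ∑ m ∈ p.support, m 2 = 4 := by omega
      intro i
      fin_cases i
      · exact h0
      · exact h1
      · exact h2
    exact deg3 p hcard hvan' hdeg hzero hcol
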